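/- arXiv:2208.06967 — 5 statements merged into one kernel-verified Lean document; each statement's English description precedes it below -/
import Mathlib

section
/- For the q×q matrix D_V(z) representing the one-dimensional discrete periodic Schrödinger operator Δ+V with Floquet boundary condition u(n+q)=z·u(n), the quantity det(D_V(z)−λI) − (−1)^{q+1}z − (−1)^{q+1}z^{-1} is independent of z ∈ ℂ\{0}. -/
noncomputable section
open Complex Polynomial Finset

def hop (q : ℕ) (z : ℂ) (i j : Fin q) : ℂ :=
  (if (j : ℕ) = (i : ℕ) + 1 then 1 else 0) +
  (if (i : ℕ) = (j : ℕ) + 1 then 1 else 0) +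
  (if (i : ℕ) = 0 ∧ (j : ℕ) = q - 1 then z⁻¹ else 0) +
  (if (j : ℕ) = 0 ∧ (i : ℕ) = q - 1 then z else 0)

/-- The q×q Floquet matrix of the 1D discrete periodic Schrödinger operator Δ+V
with boundary condition u(n+q) = z·u(n). -/
def floqMat (q : ℕ) (V : ℤ → ℂ) (z : ℂ) : Matrix (Fin q) (Fin q) ℂ :=
  Matrix.of fun i j => (if i = j then V (((i : ℕ) : ℤ) + 1) else 0) + hop q z i j

/-- P_V(z, λ) = det(D_V(z) - λ I). -/
def floqP (q : ℕ) (V : ℤ → ℂ) (z lam : ℂ) : ℂ :=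
  (floqMat q V z - lam • (1 : Matrix (Fin q) (Fin q) ℂ)).det

/-- Average [V] of a q-periodic potential over one period. -/
def avg (q : ℕ) (V : ℤ → ℂ) : ℂ := (q : ℂ)⁻¹ * ∑ j ∈ Finset.range q, V ((j : ℤ) + 1)

def triA (n : ℕ) (V : ℤ → ℂ) (lam : ℂ) : Matrix (Fin n) (Fin n) ℂ :=
  Matrix.of fun i j =>
    (if i = j then V (((i : ℕ) : ℤ) + 1) - lam else 0) +
    (if (j : ℕ) = (i : ℕ) + 1 then 1 else 0) +
    (if (i : ℕ) = (j : ℕ) + 1 then 1 else 0)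

lemma myUpdateRow_comm {n : ℕ} (A : Matrix (Fin n) (Fin n) ℂ) {i j : Fin n} (h : i ≠ j)
    (u v : Fin n → ℂ) :
    (A.updateRow i u).updateRow j v = (A.updateRow j v).updateRow i u := by
  ext a b
  by_cases hai : a = i <;> by_cases haj : a = j <;>
    simp [Matrix.updateRow_apply, hai, haj] <;> simp_all

set_option maxHeartbeats 8000000 in
lemma decomp (m : ℕ) (V : ℤ → ℂ) (z lam : ℂ) :
    floqMat (m+2) V z - lam • (1 : Matrix (Fin (m+2)) (Fin (m+2)) ℂ) =
      ((triA (m+2) V lam).updateRow 0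
          (triA (m+2) V lam 0 + z⁻¹ • (Pi.single (Fin.last (m+1)) 1 : Fin (m+2) → ℂ))).updateRow
        (Fin.last (m+1)) (triA (m+2) V lam (Fin.last (m+1)) + z • (Pi.single 0 1 : Fin (m+2) → ℂ)) := by
  ext i j
  have hi := i.isLt
  have hj := j.isLt
  by_cases hiL : i = Fin.last (m+1) <;> by_cases hi0 : i = (0 : Fin (m+2)) <;>
    by_cases hjL : j = Fin.last (m+1) <;> by_cases hj0 : j = (0 : Fin (m+2)) <;>
    subst_vars <;>
    simp only [floqMat, hop, triA, Matrix.sub_apply, Matrix.smul_apply, Matrix.one_apply,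
      Matrix.updateRow_apply, Matrix.of_apply, Pi.add_apply, Pi.smul_apply, Pi.single_apply,
      smul_eq_mul, Nat.add_sub_cancel] <;>
    (try simp only [Fin.ext_iff, Fin.val_last, Fin.val_zero, show m + 2 - 1 = m + 1 from rfl,
      true_and, and_true, false_and, and_false, not_true, not_false_iff, if_true, if_false,
      eq_self_iff_true] at *) <;>
    split_ifs <;> first | omega | ring1 | (exfalso; simp_all; done) | (simp only [zero_add, false_and, and_false, if_false, ite_false] at * <;> split_ifs <;> first | omega | ring1 | (exfalso; simp_all))


lemma detC2 (m : ℕ) (V : ℤ → ℂ) (lam : ℂ) :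
    ((triA (m+2) V lam).updateRow (Fin.last (m+1)) (Pi.single 0 1)).det = (-1 : ℂ) ^ (m+1) := by
  rw [Matrix.det_succ_row _ (Fin.last (m+1))]
  rw [Finset.sum_eq_single 0]
  · simp only [Matrix.updateRow_self, Pi.single_eq_same, Fin.val_last, Fin.val_zero, add_zero,
      mul_one]
    have : (((triA (m+2) V lam).updateRow (Fin.last (m+1)) (Pi.single 0 1)).submatrix
        (Fin.last (m+1)).succAbove (0 : Fin (m+2)).succAbove).det = 1 := by
      rw [Matrix.det_of_lowerTriangular]
      · apply Finset.prod_eq_one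
        intro i _
        have hne : (Fin.castSucc i) ≠ Fin.last (m+1) := (Fin.castSucc_lt_last i).ne
        simp [Matrix.submatrix_apply, Fin.succAbove_last, Fin.succAbove_zero,
          Matrix.updateRow_ne hne, triA, Fin.ext_iff]
        omega
      · intro i j hij
        have hne : (Fin.castSucc i) ≠ Fin.last (m+1) := (Fin.castSucc_lt_last i).ne
        have hij' : (i : ℕ) < (j : ℕ) := hij
        simp only [Matrix.submatrix_apply, Fin.succAbove_last, Fin.succAbove_zero,
          Matrix.updateRow_ne hne, triA, Matrix.of_apply, Fin.ext_iff, Fin.coe_castSucc,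
          Fin.val_succ]
        split_ifs <;> first | omega | ring
    rw [this, mul_one]
  · intro j _ hj
    simp [Pi.single_eq_of_ne hj]
  · simp

lemma detC1 (m : ℕ) (V : ℤ → ℂ) (lam : ℂ) :
    ((triA (m+2) V lam).updateRow 0 (Pi.single (Fin.last (m+1)) 1)).det = (-1 : ℂ) ^ (m+1) := by
  rw [Matrix.det_succ_row _ 0]
  rw [Finset.sum_eq_single (Fin.last (m+1))]
  · simp only [Matrix.updateRow_self, Pi.single_eq_same, Fin.val_last, Fin.val_zero, zero_add,
      mul_one]
    have : (((triA (m+2) V lam).updateRow 0 (Pi.single (Fin.last (m+1)) 1)).submatrix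
        (0 : Fin (m+2)).succAbove (Fin.last (m+1)).succAbove).det = 1 := by
      rw [Matrix.det_of_upperTriangular]
      · apply Finset.prod_eq_one
        intro i _
        have hne : (Fin.succ i) ≠ (0 : Fin (m+2)) := (Fin.succ_ne_zero i)
        simp only [Matrix.submatrix_apply, Fin.succAbove_last, Fin.succAbove_zero,
          Matrix.updateRow_ne hne, triA, Fin.ext_iff]
        simp
        omega
      · intro i j hij
        have hne : (Fin.succ i) ≠ (0 : Fin (m+2)) := (Fin.succ_ne_zero i)
        have hij' : (j : ℕ) < (i : ℕ) := hij
        simp only [Matrix.submatrix_apply, Fin.succAbove_last, Fin.succAbove_zero,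
          Matrix.updateRow_ne hne, triA, Matrix.of_apply, Fin.ext_iff, Fin.coe_castSucc,
          Fin.val_succ]
        split_ifs <;> first | omega | ring
    rw [this, mul_one]
  · intro j _ hj
    simp [Pi.single_eq_of_ne hj]
  · simp

lemma key (m : ℕ) (V : ℤ → ℂ) (lam z : ℂ) (hz : z ≠ 0) :
    floqP (m+2) V z lam =
      (triA (m+2) V lam).det
      + (((triA (m+2) V lam).updateRow (Fin.last (m+1)) (Pi.single 0 1)).updateRow 0
          (Pi.single (Fin.last (m+1)) 1)).det
      + (-1 : ℂ) ^ (m+1) * z⁻¹ + (-1 : ℂ) ^ (m+1) * z := by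
  set A := triA (m+2) V lam with hA
  have h0L : (0 : Fin (m+2)) ≠ Fin.last (m+1) := by
    simp [Fin.ext_iff]
  have hL0 : (Fin.last (m+1)) ≠ (0 : Fin (m+2)) := h0L.symm
  set e0 : Fin (m+2) → ℂ := Pi.single 0 1 with he0
  set eL : Fin (m+2) → ℂ := Pi.single (Fin.last (m+1)) 1 with heL
  rw [floqP, decomp]
  set M₁ := A.updateRow 0 (A 0 + z⁻¹ • eL) with hM₁
  have step1 : (M₁.updateRow (Fin.last (m+1)) (A (Fin.last (m+1)) + z • e0)).det
      = M₁.det + z * (M₁.updateRow (Fin.last (m+1)) e0).det := by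
    rw [Matrix.det_updateRow_add, Matrix.det_updateRow_smul]
    congr 1
    have : A (Fin.last (m+1)) = M₁ (Fin.last (m+1)) := by
      rw [hM₁, Matrix.updateRow_ne hL0]
    rw [this, Matrix.updateRow_eq_self]
  have step2 : M₁.det = A.det + z⁻¹ * (A.updateRow 0 eL).det := by
    rw [hM₁, Matrix.det_updateRow_add, Matrix.det_updateRow_smul, Matrix.updateRow_eq_self]
  have step3 : (M₁.updateRow (Fin.last (m+1)) e0).det
      = (A.updateRow (Fin.last (m+1)) e0).det
        + z⁻¹ * ((A.updateRow (Fin.last (m+1)) e0).updateRow 0 eL).det := by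
    rw [hM₁, myUpdateRow_comm A h0L, Matrix.det_updateRow_add, Matrix.det_updateRow_smul]
    congr 2
    have : A 0 = (A.updateRow (Fin.last (m+1)) e0) 0 := by
      rw [Matrix.updateRow_ne h0L]
    rw [this, Matrix.updateRow_eq_self]
  rw [step1, step2, step3, detC1, detC2]
  have hC3 : ((A.updateRow (Fin.last (m+1)) e0).updateRow 0 eL).det
      = (((triA (m+2) V lam).updateRow (Fin.last (m+1)) (Pi.single 0 1)).updateRow 0
          (Pi.single (Fin.last (m+1)) 1)).det := rfl
  rw [hC3]
  field_simp
  ring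


/-- det(D_V(z) − λI) − (−1)^{q+1}z − (−1)^{q+1}z⁻¹ is independent of z ∈ ℂ\{0}. -/
theorem stmt_0 (q : ℕ) (hq : 1 ≤ q) (V : ℤ → ℂ) (hV : ∀ n : ℤ, V (n + q) = V n)
    (z w : ℂ) (hz : z ≠ 0) (hw : w ≠ 0) (lam : ℂ) :
    floqP q V z lam - (-1 : ℂ) ^ (q + 1) * z - (-1 : ℂ) ^ (q + 1) * z⁻¹ =
      floqP q V w lam - (-1 : ℂ) ^ (q + 1) * w - (-1 : ℂ) ^ (q + 1) * w⁻¹ := by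
  match q, hq with
  | 1, _ =>
    have h1 : ∀ u : ℂ, floqP 1 V u lam = V 1 + u⁻¹ + u - lam := by
      intro u
      rw [floqP, Matrix.det_fin_one]
      simp [floqMat, hop, Matrix.sub_apply, Matrix.smul_apply, Matrix.one_apply]
      ring
    rw [h1 z, h1 w]
    norm_num
    ring
  | (m+2), _ =>
    have hpow : ((-1 : ℂ)) ^ (m + 2 + 1) = (-1 : ℂ) ^ (m+1) := by
      show ((-1 : ℂ)) ^ (m + 1 + 2) = (-1 : ℂ) ^ (m+1)
      rw [pow_add]
      norm_num
    rw [key m V lam z hz, key m V lam w hw, hpow]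
    ring
end
end

section
/- If X, Y: ℤ → ℂ are q-periodic potentials that are Floquet isospectral, then [X] = [Y], i.e., the averages of X and Y over a period coincide. -/
noncomputable section
open Complex Polynomial Finset

lemma charpoly_eval {n : ℕ} (M : Matrix (Fin n) (Fin n) ℂ) (r : ℂ) :
    M.charpoly.eval r = (r • (1 : Matrix (Fin n) (Fin n) ℂ) - M).det := by
  rw [Matrix.charpoly, _root_.eval_det, Matrix.matPolyEquiv_charmatrix]
  simp only [eval_sub, eval_X, eval_C, Matrix.smul_eq_diagonal_mul, Matrix.mul_one]
  congr 1

/-- Floquet isospectral potentials have the same average. -/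
theorem stmt_3 (q : ℕ) (hq : 1 ≤ q) (X Y : ℤ → ℂ)
    (hX : ∀ n : ℤ, X (n + q) = X n) (hY : ∀ n : ℤ, Y (n + q) = Y n)
    (hiso : ∀ z : ℂ, z ≠ 0 → ∀ lam : ℂ, floqP q X z lam = floqP q Y z lam) :
    avg q X = avg q Y := by
  have : NeZero q := ⟨by omega⟩
  set A := floqMat q X 1 with hA
  set B := floqMat q Y 1 with hB
  have hev : ∀ lam : ℂ, A.charpoly.eval lam = B.charpoly.eval lam := by
    intro lam
    have h := hiso 1 one_ne_zero lam
    unfold floqP at h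
    rw [charpoly_eval, charpoly_eval]
    have e1 : lam • (1 : Matrix (Fin q) (Fin q) ℂ) - A = (-1 : ℂ) • (A - lam • 1) := by
      simp
    have e2 : lam • (1 : Matrix (Fin q) (Fin q) ℂ) - B = (-1 : ℂ) • (B - lam • 1) := by
      simp
    rw [e1, e2, Matrix.det_smul, Matrix.det_smul, h]
  have hcp : A.charpoly = B.charpoly := Polynomial.funext hev
  have htr : A.trace = B.trace := by
    rw [Matrix.trace_eq_neg_charpoly_coeff, Matrix.trace_eq_neg_charpoly_coeff, hcp]
  have htr' : ∑ i : Fin q, X (((i : ℕ) : ℤ) + 1) = ∑ i : Fin q, Y (((i : ℕ) : ℤ) + 1) := by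
    have hAd : ∀ i : Fin q, A i i = X (((i : ℕ) : ℤ) + 1) + hop q 1 i i := by
      intro i; simp [hA, floqMat]
    have hBd : ∀ i : Fin q, B i i = Y (((i : ℕ) : ℤ) + 1) + hop q 1 i i := by
      intro i; simp [hB, floqMat]
    have := htr
    simp only [Matrix.trace] at this
    simp only [Matrix.diag, hAd, hBd, Finset.sum_add_distrib] at this
    exact add_right_cancel this
  unfold avg
  congr 1
  rw [← Fin.sum_univ_eq_sum_range (fun j => X ((j : ℤ) + 1)),
      ← Fin.sum_univ_eq_sum_range (fun j => Y ((j : ℤ) + 1))]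
  exact htr'
end
end

section
/- Let V, Ṽ: ℤ → ℂ be q-periodic with [V] = [Ṽ], and suppose V and Ṽ are not Floquet isospectral. Fix the branches λ_V^l, λ_Ṽ^l of eigenvalues of D_V(z^q), D_Ṽ(z^q) with asymptotics λ^l(z) = e^{2πil/q}z + [V] + O(1/z). Then there exist R > 0 and ε > 0 such that for every η ∈ ℂ with 0 < |η| < ε and every l ∈ {0,1,...,q−1}, the equation λ_V^l(z) = λ_Ṽ^l(z) + η has at least one solution z with |z| ≥ R. -/
noncomputable section
open Complex Polynomial Finset

lemma hop_entry_analytic (q : ℕ) (V : ℤ → ℂ) (mu : ℂ) (i j : Fin q) :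
    AnalyticOnNhd ℂ (fun w => (floqMat q V w - mu • (1 : Matrix (Fin q) (Fin q) ℂ)) i j)
      {w : ℂ | w ≠ 0} := by
  have h : (fun w : ℂ => (floqMat q V w - mu • (1 : Matrix (Fin q) (Fin q) ℂ)) i j) =
      fun w => ((if i = j then V (((i:ℕ):ℤ)+1) else 0) +
        (((if (j : ℕ) = (i : ℕ) + 1 then (1:ℂ) else 0) +
        (if (i : ℕ) = (j : ℕ) + 1 then 1 else 0) +
        (if (i : ℕ) = 0 ∧ (j : ℕ) = q - 1 then w⁻¹ else 0)) +
        (if (j : ℕ) = 0 ∧ (i : ℕ) = q - 1 then w else 0))) -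
        mu * (if i = j then 1 else 0) := by
    funext w
    simp [floqMat, hop, Matrix.sub_apply, Matrix.smul_apply, Matrix.one_apply, smul_eq_mul,
      add_assoc]
  rw [h]
  apply AnalyticOnNhd.sub ?_ analyticOnNhd_const
  apply AnalyticOnNhd.add analyticOnNhd_const
  apply AnalyticOnNhd.add
  · apply AnalyticOnNhd.add (AnalyticOnNhd.add analyticOnNhd_const analyticOnNhd_const)
    split_ifs
    · exact analyticOnNhd_inv
    · exact analyticOnNhd_const
  · split_ifs
    · exact analyticOnNhd_id
    · exact analyticOnNhd_const

lemma floqP_analytic (q : ℕ) (V : ℤ → ℂ) (mu : ℂ) :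
    AnalyticOnNhd ℂ (fun w => floqP q V w mu) {w : ℂ | w ≠ 0} := by
  have h : (fun w => floqP q V w mu) = fun w => ∑ σ : Equiv.Perm (Fin q),
      ((Equiv.Perm.sign σ : ℤ) : ℂ) *
        ∏ i, (floqMat q V w - mu • (1 : Matrix (Fin q) (Fin q) ℂ)) (σ i) i := by
    funext w
    rw [floqP, Matrix.det_apply]
    simp [Units.smul_def, zsmul_eq_mul]
  rw [h]
  exact Finset.analyticOnNhd_fun_sum _ fun σ _ =>
    analyticOnNhd_const.mul (Finset.analyticOnNhd_fun_prod _ fun i _ =>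
      hop_entry_analytic q V mu (σ i) i)

open Filter in
open Fin.NatCast in
/-- Lemma 3.2: if [V] = [Ṽ] and V, Ṽ are not Floquet isospectral, then for all
sufficiently small η ≠ 0 and every l, the equation λ_V^l(z) = λ_Ṽ^l(z) + η has a solution
with |z| ≥ R. The branches are given as hypotheses: analytic factorizations of the
characteristic polynomials of D_V(z^q), D_Ṽ(z^q) with asymptotics e^{2πil/q}z + [V] + o(1). -/
theorem stmt_5 (q : ℕ) (hq : 1 ≤ q) (V W : ℤ → ℂ)
    (hV : ∀ n : ℤ, V (n + q) = V n) (hW : ∀ n : ℤ, W (n + q) = W n)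
    (havg : avg q V = avg q W)
    (hniso : ¬ (∀ z : ℂ, z ≠ 0 → ∀ lam : ℂ, floqP q V z lam = floqP q W z lam))
    (R₀ : ℝ) (hR₀ : 0 < R₀) (lamV lamW : Fin q → ℂ → ℂ)
    (hprodV : ∀ z : ℂ, R₀ < ‖z‖ → ∀ mu : ℂ,
      floqP q V (z ^ q) mu = ∏ l : Fin q, (lamV l z - mu))
    (hprodW : ∀ z : ℂ, R₀ < ‖z‖ → ∀ mu : ℂ,
      floqP q W (z ^ q) mu = ∏ l : Fin q, (lamW l z - mu))
    (hanV : ∀ l : Fin q, AnalyticOnNhd ℂ (lamV l) {z : ℂ | R₀ < ‖z‖})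
    (hanW : ∀ l : Fin q, AnalyticOnNhd ℂ (lamW l) {z : ℂ | R₀ < ‖z‖})
    (hasymV : ∀ l : Fin q, Tendsto
      (fun z : ℂ => lamV l z - (Complex.exp (2 * Real.pi * Complex.I * (l : ℕ) / q) * z + avg q V))
      (comap (fun z : ℂ => ‖z‖) atTop) (nhds 0))
    (hasymW : ∀ l : Fin q, Tendsto
      (fun z : ℂ => lamW l z - (Complex.exp (2 * Real.pi * Complex.I * (l : ℕ) / q) * z + avg q W))
      (comap (fun z : ℂ => ‖z‖) atTop) (nhds 0)) :
    ∃ R : ℝ, 0 < R ∧ ∃ ε : ℝ, 0 < ε ∧ ∀ η : ℂ, 0 < ‖η‖ → ‖η‖ < ε →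
      ∀ l : Fin q, ∃ z : ℂ, R ≤ ‖z‖ ∧ lamV l z = lamW l z + η := by
  have hqz : NeZero q := ⟨by omega⟩
  have hqne : (q : ℂ) ≠ 0 := Nat.cast_ne_zero.mpr (by omega)
  set ζ : ℂ := Complex.exp (2 * Real.pi * Complex.I / q) with hζdef
  have hζq : ζ ^ q = 1 := by
    rw [hζdef, ← Complex.exp_nat_mul]
    have h : (q:ℂ) * (2 * Real.pi * Complex.I / q) = 2 * Real.pi * Complex.I := by field_simp
    rw [h, Complex.exp_two_pi_mul_I]
  have harg : (2 * (Real.pi:ℂ) * Complex.I / q) = ((2 * Real.pi / q : ℝ) : ℂ) * Complex.I := by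
    push_cast; ring
  have hζabs : ‖ζ‖ = 1 := by
    rw [hζdef, harg, Complex.norm_exp_ofReal_mul_I]
  have hprim : IsPrimitiveRoot ζ q := Complex.isPrimitiveRoot_exp q (by omega)
  have hpow : ∀ m n : ℕ, m % q = n % q → ζ ^ m = ζ ^ n := by
    have hmod : ∀ n : ℕ, ζ ^ n = ζ ^ (n % q) := by
      intro n
      conv_lhs => rw [← Nat.div_add_mod n q]
      rw [pow_add, pow_mul, hζq, one_pow, one_mul]
    intro m n h
    rw [hmod m, hmod n, h]
  have hexp : ∀ l : Fin q, Complex.exp (2 * Real.pi * Complex.I * (l:ℕ) / q) = ζ ^ (l:ℕ) := by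
    intro l
    rw [hζdef, ← Complex.exp_nat_mul]
    congr 1
    ring
  have hvalsucc : ∀ l : Fin q, ζ ^ ((l + 1 : Fin q) : ℕ) = ζ ^ ((l:ℕ) + 1) := by
    intro l
    apply hpow
    rw [Fin.val_add, Fin.val_one']
    conv_rhs => rw [Nat.add_mod, Nat.mod_eq_of_lt l.isLt]
    rw [Nat.mod_mod_of_dvd _ dvd_rfl]
  -- separation constant
  obtain ⟨d, hd0, hd⟩ : ∃ d > 0, ∀ a b : Fin q, a ≠ b →
      d ≤ ‖ζ^(a:ℕ) - ζ^(b:ℕ)‖ := by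
    by_cases hq1 : q = 1
    · refine ⟨1, one_pos, fun a b hab => absurd ?_ hab⟩
      subst hq1; exact Subsingleton.elim a b
    · have hsne : (Finset.univ.filter (fun p : Fin q × Fin q => p.1 ≠ p.2)).Nonempty := by
        refine ⟨(⟨0, by omega⟩, ⟨1, by omega⟩), ?_⟩
        simp
      refine ⟨(Finset.univ.filter (fun p : Fin q × Fin q => p.1 ≠ p.2)).inf' hsne
        (fun p => ‖ζ^(p.1:ℕ) - ζ^(p.2:ℕ)‖), ?_, ?_⟩
      · rw [gt_iff_lt, Finset.lt_inf'_iff]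
        rintro ⟨a, b⟩ hab
        rw [Finset.mem_filter] at hab
        have hne : ζ^(a:ℕ) ≠ ζ^(b:ℕ) := fun h => hab.2 (Fin.ext (hprim.pow_inj a.isLt b.isLt h))
        exact norm_pos_iff.mpr (sub_ne_zero.mpr hne)
      · intro a b hab
        have hmem : (a, b) ∈ Finset.univ.filter (fun p : Fin q × Fin q => p.1 ≠ p.2) := by
          rw [Finset.mem_filter]
          exact ⟨Finset.mem_univ _, hab⟩
        have := Finset.inf'_le (s := Finset.univ.filter (fun p : Fin q × Fin q => p.1 ≠ p.2))
          (fun p : Fin q × Fin q => ‖ζ^(p.1:ℕ) - ζ^(p.2:ℕ)‖) hmem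
        simpa using this
  -- error bounds
  obtain ⟨M, hM⟩ : ∃ M : ℝ, ∀ z : ℂ, M ≤ ‖z‖ → ∀ l : Fin q,
      ‖lamV l z - (ζ^(l:ℕ) * z + avg q V)‖ < 1 ∧
      ‖lamW l z - (ζ^(l:ℕ) * z + avg q W)‖ < 1 := by
    have hev : ∀ᶠ z in comap (fun z : ℂ => ‖z‖) atTop, ∀ l : Fin q,
        ‖lamV l z - (ζ^(l:ℕ) * z + avg q V)‖ < 1 ∧
        ‖lamW l z - (ζ^(l:ℕ) * z + avg q W)‖ < 1 := by
      rw [Filter.eventually_all]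
      intro l
      have h1 := Metric.tendsto_nhds.mp (hasymV l) 1 one_pos
      have h2 := Metric.tendsto_nhds.mp (hasymW l) 1 one_pos
      filter_upwards [h1, h2] with z hz1 hz2
      rw [Complex.dist_eq, sub_zero, hexp l] at hz1 hz2
      exact ⟨hz1, hz2⟩
    rw [eventually_comap, eventually_atTop] at hev
    obtain ⟨M, hM'⟩ := hev
    exact ⟨M, fun z hz => hM' _ hz z rfl⟩
  set R₁ : ℝ := max (max (R₀ + 1) (M + 1)) (max (2/d + 1) 1) with hR₁def
  have hR₁R₀ : R₀ < R₁ := lt_of_lt_of_le (by linarith) (le_trans (le_max_left _ _) (le_max_left _ _))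
  have hR₁M : M ≤ R₁ := le_trans (by linarith) (le_trans (le_max_right _ _) (le_max_left _ _))
  have hR₁d : 2/d < R₁ := lt_of_lt_of_le (by linarith) (le_trans (le_max_left _ _) (le_max_right _ _))
  have hR₁1 : 1 ≤ R₁ := le_trans (le_max_right _ _) (le_max_right _ _)
  have hR₁pos : 0 < R₁ := lt_of_lt_of_le one_pos hR₁1
  -- rotation lemma (generic)
  have key : ∀ (U' : ℤ → ℂ) (lam : Fin q → ℂ → ℂ),
      (∀ z : ℂ, R₀ < ‖z‖ → ∀ mu : ℂ,
        floqP q U' (z ^ q) mu = ∏ l : Fin q, (lam l z - mu)) →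
      (∀ z : ℂ, M ≤ ‖z‖ → ∀ l : Fin q,
        ‖lam l z - (ζ^(l:ℕ) * z + avg q U')‖ < 1) →
      ∀ z : ℂ, R₁ < ‖z‖ → ∀ l : Fin q, lam l (ζ * z) = lam (l + 1) z := by
    intro U' lam hprod herr z hz l
    have hζzabs : ‖ζ * z‖ = ‖z‖ := by rw [norm_mul, hζabs, one_mul]
    have hzR₀ : R₀ < ‖z‖ := lt_trans hR₁R₀ hz
    have hζzR₀ : R₀ < ‖ζ * z‖ := by rwa [hζzabs]
    have h0 : (∏ k : Fin q, (lam k z - lam l (ζ * z))) = 0 := by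
      have e1 : floqP q U' (z ^ q) (lam l (ζ * z)) = ∏ k : Fin q, (lam k z - lam l (ζ * z)) :=
        hprod z hzR₀ _
      have e2 : floqP q U' ((ζ * z) ^ q) (lam l (ζ * z))
          = ∏ k : Fin q, (lam k (ζ * z) - lam l (ζ * z)) := hprod (ζ * z) hζzR₀ _
      have e3 : (ζ * z) ^ q = z ^ q := by rw [mul_pow, hζq, one_mul]
      rw [← e1, ← e3, e2]
      exact Finset.prod_eq_zero (Finset.mem_univ l) (sub_self _)
    obtain ⟨k, -, hk⟩ := Finset.prod_eq_zero_iff.mp h0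
    have hkz : lam k z = lam l (ζ * z) := sub_eq_zero.mp hk
    suffices hkk : k = l + 1 by rw [← hkk]; exact hkz.symm
    by_contra hne
    have e1 := herr (ζ * z) (by rw [hζzabs]; exact le_trans hR₁M (le_of_lt hz)) l
    have e2 := herr z (le_trans hR₁M (le_of_lt hz)) k
    rw [← mul_assoc, ← pow_succ, ← hvalsucc l] at e1
    have hdk : d ≤ ‖ζ^(((l+1) : Fin q):ℕ) - ζ^((k : Fin q):ℕ)‖ :=
      hd (l+1) k (fun h => hne h.symm)
    have hcomb : (ζ^(((l+1) : Fin q):ℕ) - ζ^((k : Fin q):ℕ)) * z =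
        -(lam l (ζ * z) - (ζ^(((l+1) : Fin q):ℕ) * z + avg q U')) +
        (lam k z - (ζ^((k : Fin q):ℕ) * z + avg q U')) := by
      rw [hkz]; ring
    have hub : ‖(ζ^(((l+1) : Fin q):ℕ) - ζ^((k : Fin q):ℕ)) * z‖ < 2 := by
      rw [hcomb]
      calc ‖_‖ ≤ ‖-(lam l (ζ * z) - (ζ^(((l+1) : Fin q):ℕ) * z + avg q U'))‖
            + ‖lam k z - (ζ^((k : Fin q):ℕ) * z + avg q U')‖ := norm_add_le _ _
        _ < 2 := by rw [norm_neg]; linarith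
    have hlb : 2 < ‖(ζ^(((l+1) : Fin q):ℕ) - ζ^((k : Fin q):ℕ)) * z‖ := by
      rw [norm_mul]
      have h2 : 2 < d * ‖z‖ := by
        have : 2/d < ‖z‖ := lt_trans hR₁d hz
        calc (2:ℝ) = d * (2/d) := by field_simp
          _ < d * ‖z‖ := by apply mul_lt_mul_of_pos_left this hd0
      calc (2:ℝ) < d * ‖z‖ := h2
        _ ≤ _ := by
            apply mul_le_mul_of_nonneg_right hdk (norm_nonneg _)
    linarith
  have herrV : ∀ z : ℂ, M ≤ ‖z‖ → ∀ l : Fin q,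
      ‖lamV l z - (ζ^(l:ℕ) * z + avg q V)‖ < 1 := fun z hz l => (hM z hz l).1
  have herrW : ∀ z : ℂ, M ≤ ‖z‖ → ∀ l : Fin q,
      ‖lamW l z - (ζ^(l:ℕ) * z + avg q W)‖ < 1 := fun z hz l => (hM z hz l).2
  have hrotV := key V lamV hprodV herrV
  have hrotW := key W lamW hprodW herrW
  -- the function F l
  set F : Fin q → ℂ → ℂ := fun l w => if w = 0 then 0 else lamV l w⁻¹ - lamW l w⁻¹ with hF
  have hFeq : ∀ (l : Fin q) (w : ℂ), w ≠ 0 → F l w = lamV l w⁻¹ - lamW l w⁻¹ := by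
    intro l w hw; simp [hF, hw]
  have hF0 : ∀ l : Fin q, F l 0 = 0 := by intro l; simp [hF]
  have htends : ∀ l : Fin q,
      Tendsto (fun z => lamV l z - lamW l z) (comap (fun z : ℂ => ‖z‖) atTop) (nhds 0) := by
    intro l
    have h := (hasymV l).sub (hasymW l)
    rw [sub_zero] at h
    have heq : (fun z : ℂ =>
        (lamV l z - (Complex.exp (2 * Real.pi * Complex.I * (l : ℕ) / q) * z + avg q V)) -
        (lamW l z - (Complex.exp (2 * Real.pi * Complex.I * (l : ℕ) / q) * z + avg q W))) =
        fun z => lamV l z - lamW l z := by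
      funext z; rw [havg]; ring
    rwa [heq] at h
  have hinvtend : Tendsto (fun w : ℂ => w⁻¹) (nhdsWithin (0:ℂ) {w | w ≠ 0})
      (comap (fun z : ℂ => ‖z‖) atTop) := by
    rw [tendsto_comap_iff]
    have heq : ((fun z : ℂ => ‖z‖) ∘ fun w : ℂ => w⁻¹) = fun w : ℂ => (‖w‖)⁻¹ := by
      funext w; simp
    rw [heq]
    apply Filter.Tendsto.comp tendsto_inv_nhdsGT_zero
    apply tendsto_nhdsWithin_of_tendsto_nhds_of_eventually_within
    · have := (continuous_norm.tendsto (0:ℂ)).mono_left (nhdsWithin_le_nhds (s := {w : ℂ | w ≠ 0}))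
      simpa using this
    · filter_upwards [self_mem_nhdsWithin] with w hw
      exact norm_pos_iff.mpr hw
  have hFan : ∀ l : Fin q, AnalyticAt ℂ (F l) 0 := by
    intro l
    apply Complex.analyticAt_of_differentiable_on_punctured_nhds_of_continuousAt
    · have hball : Metric.ball (0:ℂ) R₀⁻¹ ∈ nhdsWithin (0:ℂ) {w : ℂ | w ≠ 0} :=
        nhdsWithin_le_nhds (Metric.ball_mem_nhds _ (by positivity))
      filter_upwards [hball, self_mem_nhdsWithin] with w hw hw0
      have hw0' : w ≠ 0 := hw0
      have hwpos : 0 < ‖w‖ := norm_pos_iff.mpr hw0'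
      have hwlt : ‖w‖ < R₀⁻¹ := by
        rwa [Metric.mem_ball, dist_zero_right] at hw
      have hwinv : R₀ < ‖w⁻¹‖ := by
        rw [norm_inv]
        calc R₀ = (R₀⁻¹)⁻¹ := (inv_inv R₀).symm
          _ < (‖w‖)⁻¹ := by gcongr
      have hEq : F l =ᶠ[nhds w] fun w' => lamV l w'⁻¹ - lamW l w'⁻¹ := by
        filter_upwards [isOpen_compl_singleton.mem_nhds (show w ∈ ({0}ᶜ : Set ℂ) from hw0')] with u hu
        exact hFeq l u hu
      rw [hEq.differentiableAt_iff]
      apply DifferentiableAt.sub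
      · exact DifferentiableAt.comp w ((hanV l _ hwinv).differentiableAt)
          (differentiableAt_inv hw0')
      · exact DifferentiableAt.comp w ((hanW l _ hwinv).differentiableAt)
          (differentiableAt_inv hw0')
    · rw [ContinuousAt, hF0 l]
      have h1 : Tendsto (F l) (nhdsWithin (0:ℂ) {(0:ℂ)}ᶜ ⊔ pure 0) (nhds 0) := by
        rw [tendsto_sup]
        constructor
        · apply Filter.Tendsto.congr' ?_ ((htends l).comp hinvtend)
          filter_upwards [self_mem_nhdsWithin] with w hw
          exact ((hFeq l w hw).symm : _)
        · have := tendsto_pure_nhds (F l) 0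
          rwa [hF0 l] at this
      rwa [nhdsNE_sup_pure] at h1
  -- the dichotomy; rule out the constant case
  have hopen : ∀ l : Fin q, nhds (0:ℂ) ≤ map (F l) (nhds 0) := by
    intro l
    rcases (hFan l).eventually_constant_or_nhds_le_map_nhds with hconst | h
    · exfalso
      rw [hF0 l] at hconst
      rw [Metric.eventually_nhds_iff] at hconst
      obtain ⟨δ₂, hδ₂, hc⟩ := hconst
      have hδ₂i : 0 < δ₂⁻¹ := by positivity
      have hzero : ∀ z : ℂ, δ₂⁻¹ < ‖z‖ → lamV l z = lamW l z := by
        intro z hz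
        have hz0 : z ≠ 0 := by
          intro h0
          rw [h0, norm_zero] at hz
          linarith
        have h1 : dist z⁻¹ 0 < δ₂ := by
          rw [dist_zero_right, norm_inv]
          calc (‖z‖)⁻¹ < (δ₂⁻¹)⁻¹ := by gcongr
            _ = δ₂ := inv_inv δ₂
        have h2 := hc h1
        rw [hFeq l z⁻¹ (inv_ne_zero hz0), inv_inv] at h2
        exact sub_eq_zero.mp h2
      set R₂ : ℝ := max R₁ δ₂⁻¹ with hR₂def
      have hR₂R₁ : R₁ ≤ R₂ := le_max_left _ _
      have hR₂pos : 0 < R₂ := lt_of_lt_of_le hR₁pos hR₂R₁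
      have hstep : ∀ m : ℕ, ∀ z : ℂ, R₂ < ‖z‖ →
          lamV (l + (m : Fin q)) z = lamW (l + (m : Fin q)) z := by
        intro m
        induction m with
        | zero => intro z hz; simpa using hzero z (lt_of_le_of_lt (le_max_right _ _) hz)
        | succ m ih =>
          intro z hz
          have hzR₁ : R₁ < ‖z‖ := lt_of_le_of_lt hR₂R₁ hz
          have hζz : R₂ < ‖ζ * z‖ := by rwa [norm_mul, hζabs, one_mul]
          have hcast : ((m + 1 : ℕ) : Fin q) = (m : Fin q) + 1 := by push_cast; ring
          rw [hcast, ← add_assoc, ← hrotV z hzR₁ (l + (m : Fin q)),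
            ← hrotW z hzR₁ (l + (m : Fin q))]
          exact ih (ζ * z) hζz
      have hall : ∀ l' : Fin q, ∀ z : ℂ, R₂ < ‖z‖ → lamV l' z = lamW l' z := by
        intro l' z hz
        have h' := hstep ((l' - l : Fin q) : ℕ) z hz
        have hplus : l + (l' - l) = l' := by abel
        rwa [Fin.cast_val_eq_self, hplus] at h'
      have hPeq : ∀ w : ℂ, R₂ ^ q < ‖w‖ → ∀ mu : ℂ,
          floqP q V w mu = floqP q W w mu := by
        intro w hw mu
        have hzq : (w ^ ((q:ℂ)⁻¹)) ^ q = w := Complex.cpow_nat_inv_pow w (by omega)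
        set z : ℂ := w ^ ((q:ℂ)⁻¹) with hzdef
        have hza : R₂ < ‖z‖ := by
          by_contra hle
          push_neg at hle
          have h1 : ‖w‖ ≤ R₂ ^ q := by
            rw [← hzq, norm_pow]
            exact pow_le_pow_left₀ (norm_nonneg _) hle q
          linarith
        have hzR₀ : R₀ < ‖z‖ := lt_trans hR₁R₀ (lt_of_le_of_lt hR₂R₁ hza)
        rw [← hzq, hprodV z hzR₀ mu, hprodW z hzR₀ mu]
        exact Finset.prod_congr rfl fun k _ => by rw [hall k z hza]
      push_neg at hniso
      obtain ⟨w₀, hw₀0, mu₀, hne₀⟩ := hniso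
      have hpre : IsPreconnected {w : ℂ | w ≠ 0} := by
        have h' := isConnected_compl_singleton_of_one_lt_rank
          (E := ℂ) (by rw [rank_real_complex]; norm_num) (0 : ℂ)
        have heqs : ({(0:ℂ)}ᶜ : Set ℂ) = {w : ℂ | w ≠ 0} := rfl
        rw [heqs] at h'
        exact h'.isPreconnected
      have hz₀abs : ‖((R₂ ^ q + 1 : ℝ) : ℂ)‖ = R₂ ^ q + 1 := by
        rw [Complex.norm_real, Real.norm_eq_abs, abs_of_pos (by positivity)]
      have hz₀mem : ((R₂ ^ q + 1 : ℝ) : ℂ) ∈ {w : ℂ | w ≠ 0} := by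
        simp only [Set.mem_setOf_eq]
        intro h'
        rw [h', norm_zero] at hz₀abs
        nlinarith [pow_pos hR₂pos q]
      have hev : (fun w => floqP q V w mu₀) =ᶠ[nhds ((R₂ ^ q + 1 : ℝ) : ℂ)]
          (fun w => floqP q W w mu₀) := by
        have hopen' : IsOpen {w : ℂ | R₂ ^ q < ‖w‖} :=
          isOpen_lt continuous_const continuous_norm
        have hmem' : ((R₂ ^ q + 1 : ℝ) : ℂ) ∈ {w : ℂ | R₂ ^ q < ‖w‖} := by
          simp only [Set.mem_setOf_eq, hz₀abs]; linarith
        filter_upwards [hopen'.mem_nhds hmem'] with u hu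
        exact hPeq u hu mu₀
      have heq := (floqP_analytic q V mu₀).eqOn_of_preconnected_of_eventuallyEq
        (floqP_analytic q W mu₀) hpre hz₀mem hev
      exact hne₀ (heq hw₀0)
    · rwa [hF0 l] at h
  -- conclusion via the open mapping property
  set δ : ℝ := R₁⁻¹ with hδdef
  have hδpos : 0 < δ := inv_pos.mpr hR₁pos
  have himg : ∀ l : Fin q, ∃ ε : ℝ, 0 < ε ∧ Metric.ball (0:ℂ) ε ⊆ F l '' Metric.ball 0 δ := by
    intro l
    have h1 : F l '' Metric.ball 0 δ ∈ nhds (0:ℂ) :=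
      hopen l (Filter.image_mem_map (Metric.ball_mem_nhds _ hδpos))
    rcases Metric.mem_nhds_iff.mp h1 with ⟨ε, hε, hsub⟩
    exact ⟨ε, hε, hsub⟩
  choose εf hεf0 hεfsub using himg
  have hune : ((Finset.univ : Finset (Fin q))).Nonempty := ⟨⟨0, by omega⟩, Finset.mem_univ _⟩
  refine ⟨R₁, hR₁pos, (Finset.univ : Finset (Fin q)).inf' hune εf, ?_, ?_⟩
  · rw [Finset.lt_inf'_iff]
    exact fun l _ => hεf0 l
  · intro η hη0 hηε l
    have hηl : η ∈ Metric.ball (0:ℂ) (εf l) := by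
      rw [Metric.mem_ball, dist_zero_right]
      exact lt_of_lt_of_le hηε (Finset.inf'_le _ (Finset.mem_univ l))
    obtain ⟨w, hwball, hFw⟩ := hεfsub l hηl
    have hw0 : w ≠ 0 := by
      rintro rfl
      rw [hF0 l] at hFw
      rw [← hFw, norm_zero] at hη0
      exact lt_irrefl 0 hη0
    have hwabs : ‖w‖ < δ := by
      rwa [Metric.mem_ball, dist_zero_right] at hwball
    have hwpos : 0 < ‖w‖ := norm_pos_iff.mpr hw0
    refine ⟨w⁻¹, ?_, ?_⟩
    · rw [norm_inv]
      have hR₁δ : R₁ = δ⁻¹ := by rw [hδdef, inv_inv]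
      rw [hR₁δ]
      exact inv_anti₀ hwpos hwabs.le
    · rw [hFeq l w hw0] at hFw
      rw [sub_eq_iff_eq_add] at hFw
      rw [hFw]
      ring
end
end

section
/- Let q₁, q₂ be coprime positive integers and let V: ℤ² → ℂ be (q₁ℤ ⊕ q₂ℤ)-periodic and separable, V(n₁,n₂) = V₁(n₁) + V₂(n₂) with V₁ q₁-periodic and V₂ q₂-periodic. Then for all z₁ ∈ ℂ\{0}, z₂ ∈ ℂ with |z₂| sufficiently large, and λ ∈ ℂ: P_V(z₁, z₂^{q₂}, λ) = ∏_{l=0}^{q₂−1} P_{V₁}(z₁, λ − λ_{V₂}^l(z₂)), where P_{V₁}(z₁, μ) = det(D_{V₁}(z₁) − μI) and λ_{V₂}^l are the analytic eigenvalue branches of D_{V₂}(z₂^{q₂}). -/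
noncomputable section
open Complex Polynomial Finset

/-- The q₁q₂ × q₁q₂ Floquet matrix of the 2D discrete periodic Schrödinger operator Δ+V
with boundary conditions u(n + qⱼeⱼ) = zⱼ·u(n). -/
def floqMat2 (q₁ q₂ : ℕ) (V : ℤ × ℤ → ℂ) (z₁ z₂ : ℂ) :
    Matrix (Fin q₁ × Fin q₂) (Fin q₁ × Fin q₂) ℂ :=
  Matrix.of fun p r =>
    (if p = r then V (((p.1 : ℕ) : ℤ) + 1, ((p.2 : ℕ) : ℤ) + 1) else 0) +
    (if p.2 = r.2 then hop q₁ z₁ p.1 r.1 else 0) +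
    (if p.1 = r.1 then hop q₂ z₂ p.2 r.2 else 0)

/-- P_V(z₁, z₂, λ) = det(D_V(z₁,z₂) - λ I). -/
def floqP2 (q₁ q₂ : ℕ) (V : ℤ × ℤ → ℂ) (z₁ z₂ lam : ℂ) : ℂ :=
  (floqMat2 q₁ q₂ V z₁ z₂ - lam • (1 : Matrix (Fin q₁ × Fin q₂) (Fin q₁ × Fin q₂) ℂ)).det

/-- Average of a 2D periodic potential over the fundamental domain. -/
def avg2 (q₁ q₂ : ℕ) (V : ℤ × ℤ → ℂ) : ℂ :=
  ((q₁ : ℂ) * q₂)⁻¹ * ∑ i ∈ Finset.range q₁, ∑ j ∈ Finset.range q₂, V ((i : ℤ) + 1, (j : ℤ) + 1)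


open Matrix Kronecker

/-- Every complex square matrix can be triangularized: A * U = U * T with U invertible
and T upper triangular. -/
lemma tri_aux : ∀ (n : ℕ) (A : Matrix (Fin n) (Fin n) ℂ),
    ∃ U T : Matrix (Fin n) (Fin n) ℂ, IsUnit U.det ∧ T.BlockTriangular id ∧ A * U = U * T := by
  intro n
  induction n with
  | zero =>
    intro A
    exact ⟨1, A, by simp, fun i j _ => i.elim0, by rw [mul_one, one_mul]⟩
  | succ n ih =>
    intro A
    -- find an eigenvalue
    obtain ⟨μ, hμ⟩ := spectrum.nonempty_of_isAlgClosed_of_finiteDimensional ℂ A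
    rw [spectrum.mem_iff] at hμ
    have hdet : ((algebraMap ℂ (Matrix (Fin (n+1)) (Fin (n+1)) ℂ)) μ - A).det = 0 := by
      by_contra h
      exact hμ ((Matrix.isUnit_iff_isUnit_det _).2 (isUnit_iff_ne_zero.2 h))
    obtain ⟨v, hv0, hv⟩ := (Matrix.exists_mulVec_eq_zero_iff).2 hdet
    have hAv : A.mulVec v = μ • v := by
      have h1 : ((algebraMap ℂ (Matrix (Fin (n+1)) (Fin (n+1)) ℂ)) μ).mulVec v - A.mulVec v = 0 := by
        rw [← Matrix.sub_mulVec, hv]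
      simp only [Algebra.algebraMap_eq_smul_one, Matrix.smul_mulVec,
        Matrix.one_mulVec, sub_eq_zero] at h1
      exact h1.symm
    -- index where v is nonzero
    obtain ⟨i₀, hi₀⟩ := Function.ne_iff.1 hv0
    simp only [Pi.zero_apply] at hi₀
    -- the change-of-basis matrix W, with first column v
    set σ : Equiv.Perm (Fin (n+1)) := Equiv.swap 0 i₀ with hσ
    set P : Matrix (Fin (n+1)) (Fin (n+1)) ℂ :=
      1 + Matrix.replicateCol (Fin 1) (v - Pi.single i₀ 1) * Matrix.replicateRow (Fin 1) (Pi.single i₀ (1:ℂ)) with hP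
    set W : Matrix (Fin (n+1)) (Fin (n+1)) ℂ := P.submatrix id σ with hW
    have hdetP : P.det = v i₀ := by
      rw [hP]
      erw [Matrix.det_one_add_replicateCol_mul_replicateRow]
      simp [Pi.single_apply]
    have hdetW : IsUnit W.det := by
      rw [hW, Matrix.det_permute', hdetP]
      apply isUnit_iff_ne_zero.2
      apply mul_ne_zero _ hi₀
      simp [Int.cast_injective]
    -- first column of W is v
    have hWcol : ∀ j, W j 0 = v j := by
      intro j
      rw [hW]
      simp only [Matrix.submatrix_apply, id_eq, hσ, Equiv.swap_apply_left]
      rw [hP]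
      simp [Matrix.mul_apply, Pi.single_apply, Matrix.one_apply]
    -- B = W⁻¹ A W
    set B : Matrix (Fin (n+1)) (Fin (n+1)) ℂ := W⁻¹ * A * W with hB
    have hAW : A * W = W * B := by
      rw [hB, ← Matrix.mul_assoc, ← Matrix.mul_assoc, Matrix.mul_nonsing_inv W hdetW, Matrix.one_mul]
    have hBcol : ∀ j, B j 0 = if j = 0 then μ else 0 := by
      set w : Fin (n+1) → ℂ := μ • (Pi.single (0 : Fin (n+1)) (1:ℂ) : Fin (n+1) → ℂ) with hw
      have hcol : (fun j => B j 0) = w := by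
        have h1 : W.mulVec (fun j => B j 0) = W.mulVec w := by
          have lhs : W.mulVec (fun j => B j 0) = fun i => (W * B) i 0 := by
            funext i; rw [Matrix.mulVec, Matrix.mul_apply]; rfl
          have rhs : W.mulVec w = μ • v := by
            rw [hw, Matrix.mulVec_smul]
            congr 1
            rw [Matrix.mulVec_single]
            funext i; simp [hWcol i]
          rw [lhs, rhs, ← hAW]
          funext i
          rw [Matrix.mul_apply]
          have : A *ᵥ (fun j => W j 0) = μ • v := by
            have : (fun j => W j 0) = v := funext hWcol
            rw [this, hAv]
          calc ∑ j, A i j * W j 0 = (A *ᵥ (fun j => W j 0)) i := rfl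
            _ = (μ • v) i := by rw [this]
        have hinj : Function.Injective W.mulVec := by
          intro x y hxy
          have := congrArg (W⁻¹.mulVec ·) hxy
          simpa [Matrix.mulVec_mulVec, Matrix.nonsing_inv_mul W hdetW] using this
        exact hinj h1
      intro j
      have hj := congrFun hcol j
      rw [hj, hw]
      by_cases h : j = 0 <;> simp [h, Pi.single_apply]
    -- reindex along Fin 1 ⊕ Fin n
    set e : Fin 1 ⊕ Fin n ≃ Fin (n + 1) := finSumFinEquiv.trans (finCongr (Nat.add_comm 1 n)) with he
    have he1 : ∀ i₁ : Fin 1, e (Sum.inl i₁) = 0 := by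
      intro i₁
      apply Fin.ext
      simp [he, finSumFinEquiv]
    have he2 : ∀ i' : Fin n, e (Sum.inr i') = i'.succ := by
      intro i'
      apply Fin.ext
      simp [he, finSumFinEquiv]
    set Bt : Matrix (Fin 1 ⊕ Fin n) (Fin 1 ⊕ Fin n) ℂ := B.submatrix e e with hBt
    set B11 := Bt.toBlocks₁₁ with hB11
    set B12 := Bt.toBlocks₁₂ with hB12
    set B22 := Bt.toBlocks₂₂ with hB22
    obtain ⟨U', T', hU', hT', hcom'⟩ := ih B22
    have hB21 : Bt.toBlocks₂₁ = 0 := by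
      ext i' j₁
      simp only [Matrix.toBlocks₂₁, Matrix.of_apply, hBt, Matrix.submatrix_apply, he2, he1,
        Matrix.zero_apply]
      rw [hBcol]
      simp [Fin.succ_ne_zero]
    have hBtdec : Bt = Matrix.fromBlocks B11 B12 0 B22 := by
      rw [hB11, hB12, hB22, ← hB21, Matrix.fromBlocks_toBlocks]
    set Ut : Matrix (Fin 1 ⊕ Fin n) (Fin 1 ⊕ Fin n) ℂ :=
      Matrix.fromBlocks (1 : Matrix (Fin 1) (Fin 1) ℂ) 0 0 U' with hUt
    set Tt : Matrix (Fin 1 ⊕ Fin n) (Fin 1 ⊕ Fin n) ℂ :=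
      Matrix.fromBlocks B11 (B12 * U') 0 T' with hTt
    have hmul : Bt * Ut = Ut * Tt := by
      rw [hBtdec, hUt, hTt, Matrix.fromBlocks_multiply, Matrix.fromBlocks_multiply]
      simp only [Matrix.mul_one, Matrix.one_mul, Matrix.mul_zero, Matrix.zero_mul,
        add_zero, zero_add, hcom']
    -- assemble
    refine ⟨W * Ut.submatrix e.symm e.symm, Tt.submatrix e.symm e.symm, ?_, ?_, ?_⟩
    · rw [Matrix.det_mul, Matrix.det_submatrix_equiv_self, hUt,
        Matrix.det_fromBlocks_zero₂₁, Matrix.det_one, one_mul]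
      exact hdetW.mul hU'
    · intro i j hij
      simp only [Matrix.submatrix_apply]
      rcases hi : e.symm i with i₁ | i' <;> rcases hj : e.symm j with j₁ | j'
      · exfalso
        have hi' : i = 0 := by rw [← Equiv.apply_symm_apply e i, hi, he1]
        have hj' : j = 0 := by rw [← Equiv.apply_symm_apply e j, hj, he1]
        rw [hi', hj'] at hij
        exact lt_irrefl _ hij
      · exfalso
        have hi' : i = 0 := by rw [← Equiv.apply_symm_apply e i, hi, he1]
        rw [hi'] at hij
        exact (Fin.not_lt_zero _) hij
      · simp [hTt]
      · have hi' : i = i'.succ := by rw [← Equiv.apply_symm_apply e i, hi, he2]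
        have hj' : j = j'.succ := by rw [← Equiv.apply_symm_apply e j, hj, he2]
        rw [hi', hj'] at hij
        have : j' < i' := by
          simpa [Fin.succ_lt_succ_iff] using hij
        simp only [hTt, Matrix.fromBlocks_apply₂₂]
        exact hT' this
    · have hBU : B * Ut.submatrix e.symm e.symm = (Ut.submatrix e.symm e.symm) * Tt.submatrix e.symm e.symm := by
        have hBsub : B = Bt.submatrix e.symm e.symm := by
          rw [hBt, Matrix.submatrix_submatrix]
          simp
        rw [hBsub, Matrix.submatrix_mul_equiv Bt Ut _ e.symm _,
          Matrix.submatrix_mul_equiv Ut Tt _ e.symm _, hmul]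
      calc A * (W * Ut.submatrix e.symm e.symm)
          = (A * W) * Ut.submatrix e.symm e.symm := by rw [Matrix.mul_assoc]
        _ = W * (B * Ut.submatrix e.symm e.symm) := by rw [hAW, Matrix.mul_assoc]
        _ = W * (Ut.submatrix e.symm e.symm * Tt.submatrix e.symm e.symm) := by rw [hBU]
        _ = W * Ut.submatrix e.symm e.symm * Tt.submatrix e.symm e.symm := by
            rw [Matrix.mul_assoc]

-- appended after defs
open Kronecker in
theorem stmt_8' (q₁ q₂ : ℕ) (hq₁ : 1 ≤ q₁) (hq₂ : 1 ≤ q₂)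
    (V : ℤ × ℤ → ℂ) (V₁ V₂ : ℤ → ℂ)
    (hsep : ∀ n₁ n₂ : ℤ, V (n₁, n₂) = V₁ n₁ + V₂ n₂)
    (R : ℝ) (lam : Fin q₂ → ℂ → ℂ)
    (hbranch : ∀ z₂ : ℂ, R < ‖z₂‖ → ∀ mu : ℂ,
      floqP q₂ V₂ (z₂ ^ q₂) mu = ∏ l : Fin q₂, (lam l z₂ - mu)) :
    ∀ z₁ : ℂ, z₁ ≠ 0 → ∀ z₂ : ℂ, R < ‖z₂‖ → ∀ lam₀ : ℂ,
      floqP2 q₁ q₂ V z₁ (z₂ ^ q₂) lam₀ =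
        ∏ l : Fin q₂, floqP q₁ V₁ z₁ (lam₀ - lam l z₂) := by
  intro z₁ hz₁ z₂ hz₂ lam₀
  haveI : NeZero q₁ := ⟨by omega⟩
  set D₁ : Matrix (Fin q₁) (Fin q₁) ℂ := floqMat q₁ V₁ z₁ with hD₁
  set D₂ : Matrix (Fin q₂) (Fin q₂) ℂ := floqMat q₂ V₂ (z₂ ^ q₂) with hD₂
  obtain ⟨U, T, hU, hT, hcom⟩ := tri_aux q₂ D₂
  -- decomposition of the 2D Floquet matrix as a Kronecker sum
  have hdec : floqMat2 q₁ q₂ V z₁ (z₂ ^ q₂) = D₁ ⊗ₖ (1 : Matrix (Fin q₂) (Fin q₂) ℂ)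
      + (1 : Matrix (Fin q₁) (Fin q₁) ℂ) ⊗ₖ D₂ := by
    ext p r
    obtain ⟨i, k⟩ := p
    obtain ⟨j, l⟩ := r
    simp only [floqMat2, hD₁, hD₂, floqMat, Matrix.add_apply, Matrix.kroneckerMap_apply,
      Matrix.of_apply, Matrix.one_apply, Prod.mk.injEq, hsep]
    by_cases h1 : i = j <;> by_cases h2 : k = l <;> simp [h1, h2] <;> ring
  set M : Matrix (Fin q₁ × Fin q₂) (Fin q₁ × Fin q₂) ℂ :=
    floqMat2 q₁ q₂ V z₁ (z₂ ^ q₂) - lam₀ • (1 : Matrix (Fin q₁ × Fin q₂) (Fin q₁ × Fin q₂) ℂ)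
    with hM
  set N : Matrix (Fin q₁ × Fin q₂) (Fin q₁ × Fin q₂) ℂ :=
    D₁ ⊗ₖ (1 : Matrix (Fin q₂) (Fin q₂) ℂ) + (1 : Matrix (Fin q₁) (Fin q₁) ℂ) ⊗ₖ T
      - lam₀ • (1 : Matrix (Fin q₁ × Fin q₂) (Fin q₁ × Fin q₂) ℂ) with hN
  set S : Matrix (Fin q₁ × Fin q₂) (Fin q₁ × Fin q₂) ℂ :=
    (1 : Matrix (Fin q₁) (Fin q₁) ℂ) ⊗ₖ U with hS
  have hone : (1 : Matrix (Fin q₁ × Fin q₂) (Fin q₁ × Fin q₂) ℂ)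
      = (1 : Matrix (Fin q₁) (Fin q₁) ℂ) ⊗ₖ (1 : Matrix (Fin q₂) (Fin q₂) ℂ) :=
    (Matrix.one_kronecker_one).symm
  have h1 : (D₁ ⊗ₖ (1 : Matrix (Fin q₂) (Fin q₂) ℂ)) * S
      = S * (D₁ ⊗ₖ (1 : Matrix (Fin q₂) (Fin q₂) ℂ)) := by
    rw [hS, ← Matrix.mul_kronecker_mul, ← Matrix.mul_kronecker_mul]
    simp
  have h2 : ((1 : Matrix (Fin q₁) (Fin q₁) ℂ) ⊗ₖ D₂) * S
      = S * ((1 : Matrix (Fin q₁) (Fin q₁) ℂ) ⊗ₖ T) := by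
    rw [hS, ← Matrix.mul_kronecker_mul, ← Matrix.mul_kronecker_mul, Matrix.one_mul, hcom]
  have h3 : (lam₀ • (1 : Matrix (Fin q₁ × Fin q₂) (Fin q₁ × Fin q₂) ℂ)) * S
      = S * (lam₀ • (1 : Matrix (Fin q₁ × Fin q₂) (Fin q₁ × Fin q₂) ℂ)) := by
    rw [smul_mul_assoc, mul_smul_comm, Matrix.one_mul, Matrix.mul_one]
  have hMS : M * S = S * N := by
    rw [hM, hN, hdec]
    rw [Matrix.sub_mul, Matrix.add_mul, Matrix.mul_sub, Matrix.mul_add]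
    rw [h1, h2, h3]
  have hdetS : IsUnit S.det := by
    rw [hS, Matrix.det_kronecker, Matrix.det_one, one_pow, one_mul]
    exact hU.pow _
  have hdetMN : M.det = N.det := by
    have := congrArg Matrix.det hMS
    rw [Matrix.det_mul, Matrix.det_mul] at this
    have hne : S.det ≠ 0 := hdetS.ne_zero
    rw [mul_comm] at this
    exact mul_left_cancel₀ hne this
  -- N is block triangular in the second index
  have hNtri : N.BlockTriangular Prod.snd := by
    intro p r h
    have hne : p ≠ r := fun hpr => (ne_of_gt h) (congrArg Prod.snd hpr)
    rw [hN]
    simp only [Matrix.sub_apply, Matrix.add_apply, Matrix.kroneckerMap_apply,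
      Matrix.smul_apply, smul_eq_mul]
    rw [Matrix.one_apply_ne (ne_of_gt h), Matrix.one_apply_ne hne, hT h]
    ring
  -- determinant of N as a product of diagonal-block determinants
  have hdetN : N.det = ∏ a : Fin q₂, floqP q₁ V₁ z₁ (lam₀ - T a a) := by
    rw [hNtri.det, Finset.image_univ_of_surjective Prod.snd_surjective]
    refine Finset.prod_congr rfl fun a _ => ?_
    rw [← Matrix.det_submatrix_equiv_self
      (⟨fun i => ⟨(i, a), rfl⟩, fun p => p.1.1, fun i => rfl,
        fun p => Subtype.ext (Prod.ext rfl p.prop.symm)⟩ :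
          Fin q₁ ≃ {p : Fin q₁ × Fin q₂ // p.2 = a}) (N.toSquareBlock Prod.snd a), floqP]
    congr 1
    ext i j
    simp only [Matrix.submatrix_apply, Matrix.toSquareBlock_def, Matrix.of_apply, hN,
      Matrix.sub_apply, Matrix.add_apply, Matrix.kroneckerMap_apply, Matrix.smul_apply,
      smul_eq_mul, hD₁, Matrix.one_apply, Prod.mk.injEq]
    by_cases hij : i = j <;> simp [hij] <;> ring
  -- diagonal of T matches the branches lam l
  have hTdiag : ∀ μ : ℂ, ∏ a : Fin q₂, (T a a - μ) = ∏ l : Fin q₂, (lam l z₂ - μ) := by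
    intro μ
    have hb := hbranch z₂ hz₂ μ
    rw [floqP, ← hD₂] at hb
    have hcom2 : (D₂ - μ • 1) * U = U * (T - μ • 1) := by
      rw [Matrix.sub_mul, Matrix.mul_sub, hcom, smul_mul_assoc, mul_smul_comm,
        Matrix.one_mul, Matrix.mul_one]
    have hdets : (D₂ - μ • 1).det = (T - μ • 1).det := by
      have hd := congrArg Matrix.det hcom2
      rw [Matrix.det_mul, Matrix.det_mul, mul_comm] at hd
      exact mul_left_cancel₀ hU.ne_zero hd
    have htri2 : (T - μ • (1 : Matrix (Fin q₂) (Fin q₂) ℂ)).BlockTriangular id := by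
      intro i j h
      have hij : i ≠ j := by
        intro hij
        rw [hij] at h
        exact lt_irrefl _ h
      simp only [Matrix.sub_apply, Matrix.smul_apply, smul_eq_mul]
      rw [hT h, Matrix.one_apply_ne hij]
      ring
    rw [hdets, Matrix.det_of_upperTriangular htri2] at hb
    rw [← hb]
    refine Finset.prod_congr rfl fun a _ => ?_
    simp [Matrix.one_apply]
  have hms : Multiset.map (fun a : Fin q₂ => T a a) Finset.univ.val
      = Multiset.map (fun l : Fin q₂ => lam l z₂) Finset.univ.val := by
    have hpoly : (Multiset.map (fun a : Fin q₂ => X - C (T a a)) Finset.univ.val).prod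
        = (Multiset.map (fun l : Fin q₂ => X - C (lam l z₂)) Finset.univ.val).prod := by
      apply Polynomial.funext
      intro r
      rw [Polynomial.eval_multiset_prod, Polynomial.eval_multiset_prod,
        Multiset.map_map, Multiset.map_map]
      simp only [Function.comp, Polynomial.eval_sub, Polynomial.eval_X, Polynomial.eval_C]
      rw [← Finset.prod_eq_multiset_prod, ← Finset.prod_eq_multiset_prod]
      have flip : ∀ g : Fin q₂ → ℂ, ∏ a : Fin q₂, (r - g a)
          = (-1 : ℂ) ^ q₂ * ∏ a : Fin q₂, (g a - r) := by
        intro g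
        calc ∏ a : Fin q₂, (r - g a) = ∏ a : Fin q₂, (-1 : ℂ) * (g a - r) :=
              Finset.prod_congr rfl (fun a _ => by ring)
          _ = (-1 : ℂ) ^ q₂ * ∏ a : Fin q₂, (g a - r) := by
              rw [Finset.prod_mul_distrib, Finset.prod_const, Finset.card_univ,
                Fintype.card_fin]
      rw [flip, flip, hTdiag r]
    have hm1 : Multiset.map (fun a : Fin q₂ => X - C (T a a)) Finset.univ.val
        = Multiset.map (fun c : ℂ => X - C c)
            (Multiset.map (fun a : Fin q₂ => T a a) Finset.univ.val) :=
      (Multiset.map_map (fun c : ℂ => X - C c) (fun a : Fin q₂ => T a a) Finset.univ.val).symm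
    have hm2 : Multiset.map (fun l : Fin q₂ => X - C (lam l z₂)) Finset.univ.val
        = Multiset.map (fun c : ℂ => X - C c)
            (Multiset.map (fun l : Fin q₂ => lam l z₂) Finset.univ.val) :=
      (Multiset.map_map (fun c : ℂ => X - C c) (fun l : Fin q₂ => lam l z₂) Finset.univ.val).symm
    rw [hm1, hm2] at hpoly
    have hroots := congrArg Polynomial.roots hpoly
    rwa [Polynomial.roots_multiset_prod_X_sub_C, Polynomial.roots_multiset_prod_X_sub_C]
      at hroots
  -- final assembly
  have hfloq : floqP2 q₁ q₂ V z₁ (z₂ ^ q₂) lam₀ = M.det := by rw [floqP2, hM]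
  rw [hfloq, hdetMN, hdetN]
  rw [Finset.prod_eq_multiset_prod, Finset.prod_eq_multiset_prod]
  have h1 : Multiset.map (fun a : Fin q₂ => floqP q₁ V₁ z₁ (lam₀ - T a a)) Finset.univ.val
      = Multiset.map (fun c : ℂ => floqP q₁ V₁ z₁ (lam₀ - c))
          (Multiset.map (fun a : Fin q₂ => T a a) Finset.univ.val) :=
    (Multiset.map_map (fun c : ℂ => floqP q₁ V₁ z₁ (lam₀ - c)) (fun a : Fin q₂ => T a a)
      Finset.univ.val).symm
  have h2 : Multiset.map (fun l : Fin q₂ => floqP q₁ V₁ z₁ (lam₀ - lam l z₂)) Finset.univ.val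
      = Multiset.map (fun c : ℂ => floqP q₁ V₁ z₁ (lam₀ - c))
          (Multiset.map (fun l : Fin q₂ => lam l z₂) Finset.univ.val) :=
    (Multiset.map_map (fun c : ℂ => floqP q₁ V₁ z₁ (lam₀ - c)) (fun l : Fin q₂ => lam l z₂)
      Finset.univ.val).symm
  rw [h1, h2, hms]


/-- for a separable 2D potential V = V₁ ⊕ V₂, the 2D Floquet determinant
factors over the eigenvalue branches of D_{V₂}(z₂^{q₂}). -/
theorem stmt_8 (q₁ q₂ : ℕ) (hq₁ : 1 ≤ q₁) (hq₂ : 1 ≤ q₂) (hco : Nat.Coprime q₁ q₂)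
    (V : ℤ × ℤ → ℂ) (V₁ V₂ : ℤ → ℂ)
    (hV₁ : ∀ n : ℤ, V₁ (n + q₁) = V₁ n) (hV₂ : ∀ n : ℤ, V₂ (n + q₂) = V₂ n)
    (hsep : ∀ n₁ n₂ : ℤ, V (n₁, n₂) = V₁ n₁ + V₂ n₂)
    (R : ℝ) (hR : 0 < R) (lam : Fin q₂ → ℂ → ℂ)
    (hbranch : ∀ z₂ : ℂ, R < ‖z₂‖ → ∀ mu : ℂ,
      floqP q₂ V₂ (z₂ ^ q₂) mu = ∏ l : Fin q₂, (lam l z₂ - mu)) :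
    ∀ z₁ : ℂ, z₁ ≠ 0 → ∀ z₂ : ℂ, R < ‖z₂‖ → ∀ lam₀ : ℂ,
      floqP2 q₁ q₂ V z₁ (z₂ ^ q₂) lam₀ =
        ∏ l : Fin q₂, floqP q₁ V₁ z₁ (lam₀ - lam l z₂) := by
  exact stmt_8' q₁ q₂ hq₁ hq₂ V V₁ V₂ hsep R lam hbranch
end
end

section
/- Let V: ℤ → ℂ be q-periodic. If V is Floquet isospectral to a constant potential c (i.e., det(D_V(z) − λI) = det(D_c(z) − λI) for all z ∈ ℂ\{0}, λ ∈ ℂ) and V is real-valued, then V is identically equal to c. -/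
noncomputable section
open Complex Polynomial Finset

section auxlemmas
variable {n : ℕ}

variable {n : ℕ}


lemma herm_conj {M : Matrix (Fin n) (Fin n) ℂ} (hM : M.IsHermitian) (t : ℂ) :
    M - t • (1 : Matrix (Fin n) (Fin n) ℂ) =
      (hM.eigenvectorUnitary : Matrix (Fin n) (Fin n) ℂ) *
        (Matrix.diagonal (fun i => (hM.eigenvalues i : ℂ)) - t • 1) *
        star (hM.eigenvectorUnitary : Matrix (Fin n) (Fin n) ℂ) := by
  have hUU : (hM.eigenvectorUnitary : Matrix (Fin n) (Fin n) ℂ) *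
      star (hM.eigenvectorUnitary : Matrix (Fin n) (Fin n) ℂ) = 1 :=
    Matrix.mem_unitaryGroup_iff.mp hM.eigenvectorUnitary.2
  rw [Matrix.mul_sub, Matrix.sub_mul]
  congr 1
  · have := hM.spectral_theorem
    rw [Unitary.conjStarAlgAut_apply] at this
    exact this
  · rw [Matrix.mul_smul, Matrix.mul_one, Matrix.smul_mul, hUU]

lemma herm_det {M : Matrix (Fin n) (Fin n) ℂ} (hM : M.IsHermitian) (t : ℂ) :
    (M - t • (1 : Matrix (Fin n) (Fin n) ℂ)).det =
      ∏ i, ((hM.eigenvalues i : ℂ) - t) := by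
  have hUU : (hM.eigenvectorUnitary : Matrix (Fin n) (Fin n) ℂ) *
      star (hM.eigenvectorUnitary : Matrix (Fin n) (Fin n) ℂ) = 1 :=
    Matrix.mem_unitaryGroup_iff.mp hM.eigenvectorUnitary.2
  rw [herm_conj hM t, Matrix.det_mul, Matrix.det_mul]
  rw [mul_comm, ← mul_assoc, ← Matrix.det_mul,
    Matrix.mem_unitaryGroup_iff'.mp hM.eigenvectorUnitary.2]
  have : Matrix.diagonal (fun i => (hM.eigenvalues i : ℂ)) - t • (1 : Matrix (Fin n) (Fin n) ℂ)
      = Matrix.diagonal (fun i => (hM.eigenvalues i : ℂ) - t) := by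
    ext i j
    rcases eq_or_ne i j with rfl | hij
    · simp [Matrix.diagonal_apply, Matrix.one_apply]
    · simp [Matrix.diagonal_apply, Matrix.one_apply, hij]
  rw [this, Matrix.det_diagonal, Matrix.det_one, one_mul]

lemma herm_trace {M : Matrix (Fin n) (Fin n) ℂ} (hM : M.IsHermitian) :
    M.trace = ∑ i, (hM.eigenvalues i : ℂ) := by
  have h := herm_conj hM 0
  simp only [zero_smul, sub_zero] at h
  conv_lhs => rw [h]
  rw [Matrix.trace_mul_cycle,
    Matrix.mem_unitaryGroup_iff'.mp hM.eigenvectorUnitary.2, Matrix.one_mul,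
    Matrix.trace_diagonal]

lemma herm_trace_sq {M : Matrix (Fin n) (Fin n) ℂ} (hM : M.IsHermitian) :
    (M * M).trace = ∑ i, (hM.eigenvalues i : ℂ) ^ 2 := by
  have h := herm_conj hM 0
  simp only [zero_smul, sub_zero] at h
  set U : Matrix (Fin n) (Fin n) ℂ := (hM.eigenvectorUnitary : Matrix (Fin n) (Fin n) ℂ) with hU
  set D : Matrix (Fin n) (Fin n) ℂ := Matrix.diagonal (fun i => (hM.eigenvalues i : ℂ)) with hD
  have hUU' : star U * U = 1 := Matrix.mem_unitaryGroup_iff'.mp hM.eigenvectorUnitary.2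
  have key : M * M = U * (D * D) * star U := by
    rw [h]
    calc U * D * star U * (U * D * star U)
        = U * D * (star U * (U * (D * star U))) := by
          simp only [Matrix.mul_assoc]
      _ = U * D * (D * star U) := by
          rw [← Matrix.mul_assoc (star U) U (D * star U), hUU', Matrix.one_mul]
      _ = U * (D * D) * star U := by simp only [Matrix.mul_assoc]
  rw [key, Matrix.trace_mul_cycle, ← Matrix.mul_assoc, hUU', Matrix.one_mul, hD,
    Matrix.diagonal_mul_diagonal, Matrix.trace_diagonal]
  simp [sq]

lemma multiset_eq_of_prod (a b : Fin n → ℂ)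
    (h : ∀ t : ℂ, ∏ i, (a i - t) = ∏ i, (b i - t)) :
    Multiset.map a Finset.univ.val = Multiset.map b Finset.univ.val := by
  have hp : ∏ i, (X - C (a i)) = ∏ i, (X - C (b i)) := by
    apply Polynomial.funext
    intro t
    have key : ∀ c : Fin n → ℂ, eval t (∏ i, (X - C (c i))) = ∏ i, ((-1) * (c i - t)) := by
      intro c
      rw [eval_prod]
      exact Finset.prod_congr rfl fun i _ => by rw [eval_sub, eval_X, eval_C]; ring
    rw [key, key, Finset.prod_mul_distrib, Finset.prod_mul_distrib, h t]
  have := congrArg Polynomial.roots hp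
  rwa [show (∏ i, (X - C (a i))) = (Multiset.map a Finset.univ.val |>.map fun r => X - C r).prod
      by rw [Multiset.map_map]; rfl,
    show (∏ i, (X - C (b i))) = (Multiset.map b Finset.univ.val |>.map fun r => X - C r).prod
      by rw [Multiset.map_map]; rfl,
    Polynomial.roots_multiset_prod_X_sub_C, Polynomial.roots_multiset_prod_X_sub_C] at this

lemma sum_fun_eq {a b : Fin n → ℂ}
    (h : Multiset.map a Finset.univ.val = Multiset.map b Finset.univ.val) (g : ℂ → ℂ) :
    ∑ i, g (a i) = ∑ i, g (b i) := by
  have e1 : ∑ i, g (a i) = ((Multiset.map a Finset.univ.val).map g).sum := by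
    rw [Multiset.map_map]; rfl
  have e2 : ∑ i, g (b i) = ((Multiset.map b Finset.univ.val).map g).sum := by
    rw [Multiset.map_map]; rfl
  rw [e1, e2, h]

end auxlemmas

lemma hop_star {q : ℕ} (i j : Fin q) : star (hop q 1 j i) = hop q 1 i j := by
  simp only [hop, inv_one, apply_ite (star : ℂ → ℂ), star_one, star_zero, star_add]
  ring

lemma hop_diag {q : ℕ} (i : Fin q) : hop q 1 i i = (if q = 1 then 2 else 0) := by
  have hne : ¬((i : ℕ) = (i : ℕ) + 1) := by omega
  rcases eq_or_ne q 1 with rfl | hq1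
  · have h0 : (i : ℕ) = 0 := by omega
    norm_num [hop, hne, h0]
  · have h2 : 2 ≤ q := by
      rcases Nat.eq_zero_or_pos q with h | h
      · exact absurd i.2 (by omega)
      · omega
    have hP : ¬((i : ℕ) = 0 ∧ (i : ℕ) = q - 1) := by omega
    simp [hop, hne, hP, hq1]

lemma floq_herm {q : ℕ} (V : ℤ → ℂ) (hreal : ∀ n : ℤ, (V n).im = 0) :
    (floqMat q V 1).IsHermitian := by
  have hVstar : ∀ m : ℤ, star (V m) = V m := fun m => by
    rw [Complex.star_def]; exact Complex.conj_eq_iff_im.mpr (hreal m)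
  refine Matrix.ext fun i j => ?_
  simp only [Matrix.conjTranspose_apply, floqMat, Matrix.of_apply, star_add, hop_star]
  congr 1
  by_cases hij : j = i
  · subst hij; simp [hVstar]
  · simp [hij, Ne.symm hij]

/-- Ambarzumian-type theorem: a real-valued q-periodic potential that is
Floquet isospectral to a constant potential c is identically equal to c. -/
theorem stmt_14 (q : ℕ) (hq : 1 ≤ q) (V : ℤ → ℂ) (hV : ∀ n : ℤ, V (n + q) = V n)
    (hreal : ∀ n : ℤ, (V n).im = 0) (c : ℂ)
    (hiso : ∀ z : ℂ, z ≠ 0 → ∀ lam : ℂ,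
      floqP q V z lam = floqP q (fun _ => c) z lam) :
    ∀ n : ℤ, V n = c := by
  classical
  set e : ℂ := if q = 1 then 2 else 0 with he
  set d : Fin q → ℂ := fun i => V (((i : ℕ) : ℤ) + 1) with hd
  set A : Matrix (Fin q) (Fin q) ℂ := floqMat q V 1 with hA'
  set Hm : Matrix (Fin q) (Fin q) ℂ := floqMat q (fun _ => (0 : ℂ)) 1 with hHm'
  have hA : A.IsHermitian := floq_herm V hreal
  have hH : Hm.IsHermitian := floq_herm (fun _ => 0) (fun _ => rfl)
  set a : Fin q → ℂ := fun i => (hA.eigenvalues i : ℂ) with ha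
  set b : Fin q → ℂ := fun i => (hH.eigenvalues i : ℂ) + c with hb
  -- B - t•1 = Hm - (t-c)•1
  have hBH : ∀ t : ℂ, floqMat q (fun _ => c) 1 - t • (1 : Matrix (Fin q) (Fin q) ℂ)
      = Hm - (t - c) • (1 : Matrix (Fin q) (Fin q) ℂ) := by
    intro t
    ext i j
    rw [hHm']
    by_cases hij : i = j
    · subst hij
      simp [floqMat, Matrix.one_apply, Matrix.sub_apply, Matrix.smul_apply]
      ring
    · simp [floqMat, Matrix.one_apply, Matrix.sub_apply, Matrix.smul_apply, hij]
  have hprod : ∀ t : ℂ, ∏ i, (a i - t) = ∏ i, (b i - t) := by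
    intro t
    have h1 := herm_det hA t
    have h2 := herm_det hH (t - c)
    have h3 := hiso 1 one_ne_zero t
    unfold floqP at h3
    rw [← hA'] at h3
    rw [hBH t] at h3
    rw [h1, h2] at h3
    rw [h3]
    exact Finset.prod_congr rfl fun i _ => by rw [hb]; ring
  have hms := multiset_eq_of_prod a b hprod
  have hsum : ∑ i, a i = ∑ i, b i := by
    simpa using sum_fun_eq hms id
  have hsumsq : ∑ i, (a i) ^ 2 = ∑ i, (b i) ^ 2 := sum_fun_eq hms (· ^ 2)
  -- entry facts
  have hAd : ∀ i : Fin q, A i i = d i + e := fun i => by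
    simp [hA', floqMat, hop_diag, hd, he]
  have hHd : ∀ i : Fin q, Hm i i = e := fun i => by
    simp [hHm', floqMat, hop_diag, he]
  have hAH : ∀ i j : Fin q, i ≠ j → A i j = Hm i j := fun i j hij => by
    simp [hA', hHm', floqMat, hij]
  -- trace identities
  have htrA : ∑ i, (d i + e) = ∑ i, a i := by
    rw [← herm_trace hA]
    exact (Finset.sum_congr rfl fun i _ => (hAd i).symm)
  have htrH : ∑ _i : Fin q, e = ∑ i, (hH.eigenvalues i : ℂ) := by
    rw [← herm_trace hH]
    exact (Finset.sum_congr rfl fun i _ => (hHd i).symm)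
  have hconst : ∀ x : ℂ, ∑ _i : Fin q, x = (q : ℂ) * x := fun x => by
    rw [Finset.sum_const, Finset.card_univ, Fintype.card_fin, nsmul_eq_mul]
  have hbsum : ∑ i, (hH.eigenvalues i : ℂ) = (q : ℂ) * e := by
    rw [← htrH, hconst]
  have hS1 : ∑ i, d i = (q : ℂ) * c := by
    have h1 : (∑ i, d i) + (q : ℂ) * e = ∑ i, a i := by
      rw [← htrA, Finset.sum_add_distrib, hconst]
    have h2 : ∑ i, b i = (q : ℂ) * e + (q : ℂ) * c := by
      rw [hb]
      simp only [Finset.sum_add_distrib, hbsum, hconst]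
    have := hsum
    rw [← h1, h2] at this
    linear_combination this
  have hcim : c.im = 0 := by
    have him := congrArg Complex.im hS1
    rw [Complex.im_sum] at him
    have hz : ∑ i : Fin q, (d i).im = 0 := by
      refine Finset.sum_eq_zero fun i _ => ?_
      simp [hd, hreal]
    rw [hz, Complex.mul_im] at him
    simp only [Complex.natCast_re, Complex.natCast_im, zero_mul, add_zero] at him
    have hq0 : (q : ℝ) ≠ 0 := by
      exact Nat.cast_ne_zero.mpr (by omega)
    rcases mul_eq_zero.mp him.symm with h | h
    · exact absurd h hq0
    · exact h
  have htrA2 : (A * A).trace = ∑ i, a i ^ 2 := herm_trace_sq hA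
  have htrH2 : (Hm * Hm).trace = ∑ i, (hH.eigenvalues i : ℂ) ^ 2 := herm_trace_sq hH
  have hexp : (A * A).trace - (Hm * Hm).trace = ∑ i, ((d i + e) ^ 2 - e ^ 2) := by
    have h1 : (A * A).trace = ∑ i, ∑ j, A i j * A j i := by
      simp [Matrix.trace, Matrix.diag, Matrix.mul_apply]
    have h2 : (Hm * Hm).trace = ∑ i, ∑ j, Hm i j * Hm j i := by
      simp [Matrix.trace, Matrix.diag, Matrix.mul_apply]
    rw [h1, h2, ← Finset.sum_sub_distrib]
    refine Finset.sum_congr rfl fun i _ => ?_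
    rw [← Finset.sum_sub_distrib, Finset.sum_eq_single i]
    · rw [hAd i, hHd i]; ring
    · intro j _ hji
      rw [hAH i j (Ne.symm hji), hAH j i hji]
      ring
    · intro h; exact absurd (Finset.mem_univ i) h
  have hb2 : ∑ i, b i ^ 2
      = ∑ i, (hH.eigenvalues i : ℂ) ^ 2 + 2 * c * ((q : ℂ) * e) + (q : ℂ) * c ^ 2 := by
    rw [hb]
    rw [show (∑ i : Fin q, ((hH.eigenvalues i : ℂ) + c) ^ 2)
        = ∑ i : Fin q, ((hH.eigenvalues i : ℂ) ^ 2 + (2 * c * (hH.eigenvalues i : ℂ) + c ^ 2))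
      from Finset.sum_congr rfl fun i _ => by ring]
    rw [Finset.sum_add_distrib, Finset.sum_add_distrib, ← Finset.mul_sum, hbsum, hconst]
    ring
  have hl : ∑ i, a i ^ 2 - ∑ i, (hH.eigenvalues i : ℂ) ^ 2
      = ∑ i, (d i) ^ 2 + 2 * e * ((q : ℂ) * c) := by
    rw [← htrA2, ← htrH2, hexp]
    rw [show (∑ i : Fin q, ((d i + e) ^ 2 - e ^ 2))
        = ∑ i : Fin q, ((d i) ^ 2 + 2 * e * d i) from Finset.sum_congr rfl fun i _ => by ring]
    rw [Finset.sum_add_distrib, ← Finset.mul_sum, hS1]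
  have h5 : ∑ i, a i ^ 2
      = ∑ i, (hH.eigenvalues i : ℂ) ^ 2 + 2 * c * ((q : ℂ) * e) + (q : ℂ) * c ^ 2 := by
    rw [hsumsq, hb2]
  have hS2 : ∑ i, (d i) ^ 2 = (q : ℂ) * c ^ 2 := by linear_combination h5 - hl
  have hzero : ∑ i, (d i - c) ^ 2 = 0 := by
    rw [show (∑ i : Fin q, (d i - c) ^ 2)
        = ∑ i : Fin q, ((d i) ^ 2 - (2 * c * d i - c ^ 2)) from
      Finset.sum_congr rfl fun i _ => by ring]
    rw [Finset.sum_sub_distrib, Finset.sum_sub_distrib, ← Finset.mul_sum, hS1, hS2, hconst]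
    ring
  have hizero : ∀ i : Fin q, (d i - c).im = 0 := fun i => by
    simp [hd, Complex.sub_im, hreal, hcim]
  have hsumre : ∑ i, ((d i - c).re) ^ 2 = 0 := by
    have h := congrArg Complex.re hzero
    rw [Complex.re_sum] at h
    rw [show (∑ i : Fin q, ((d i - c) ^ 2).re) = ∑ i : Fin q, ((d i - c).re) ^ 2 from
      Finset.sum_congr rfl fun i _ => by rw [sq, Complex.mul_re, hizero i]; ring] at h
    simpa using h
  have hdone : ∀ i : Fin q, d i = c := by
    intro i
    have h0 : ((d i - c).re) ^ 2 = 0 :=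
      (Finset.sum_eq_zero_iff_of_nonneg fun i _ => sq_nonneg _).mp hsumre i (Finset.mem_univ i)
    have hre0 : (d i - c).re = 0 := by
      exact pow_eq_zero_iff (n := 2) (by norm_num) |>.mp h0
    have hsub0 : d i - c = 0 := Complex.ext hre0 (hizero i)
    exact sub_eq_zero.mp hsub0
  intro n
  have hp : Function.Periodic V (q : ℤ) := hV
  have key : ∀ m : ℤ, 1 ≤ m → m ≤ q → V m = c := by
    intro m h1 h2
    have hlt : (m - 1).toNat < q := by omega
    have hh := hdone ⟨(m - 1).toNat, hlt⟩
    rw [hd] at hh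
    simp only at hh
    rw [Int.toNat_of_nonneg (by omega : (0:ℤ) ≤ m - 1)] at hh
    simpa using hh
  have hq' : (0 : ℤ) < q := by exact_mod_cast hq
  have hsub : V (n - (n - 1) / (q : ℤ) * q) = V n := (hp.int_mul ((n - 1) / (q : ℤ))).sub_eq n
  have hmod : n - (n - 1) / (q : ℤ) * (q : ℤ) = (n - 1) % q + 1 := by
    rw [mul_comm]
    have h := Int.mul_ediv_add_emod (n - 1) (q : ℤ)
    linarith
  rw [← hsub, hmod]
  refine key _ ?_ ?_
  · have := Int.emod_nonneg (n - 1) (ne_of_gt hq'); omega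
  · have := Int.emod_lt_of_pos (n - 1) hq'; omega
end
end
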